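/- Let x_{L+1} = x_L + u with ‖x_L‖ = sqrt(kLd), ‖x_{L+1}‖ = sqrt(k(L+1)d), ‖u‖ ≤ sqrt(kd). Then the normalized vectors satisfy ‖x_{L+1}/‖x_{L+1}‖ − x_L/‖x_L‖‖² = 2 − 2cos θ ≤ 2(1 − sqrt(L/(L+1)) + sqrt(1/(L+1))), which tends to 0 as L → ∞. -/

import Mathlib

open Filter RealInnerProductSpace

/-- Distance between normalized adjacent residual-stream vectors: it equals `2 − 2cosθ`,
is bounded by `2(1 − sqrt(L/(L+1)) + sqrt(1/(L+1)))`, and this bound tends to `0`. -/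
theorem stmt14 (d : ℕ) (hd : 0 < d) (k : ℝ) (hk : 0 < k) (L : ℕ) (hL : 1 ≤ L)
    (x u : EuclideanSpace ℝ (Fin d))
    (hx : ‖x‖ = Real.sqrt (k * L * d))
    (hxu : ‖x + u‖ = Real.sqrt (k * (L + 1) * d))
    (hu : ‖u‖ ≤ Real.sqrt (k * d)) :
    ‖‖x + u‖⁻¹ • (x + u) - ‖x‖⁻¹ • x‖ ^ 2 =
        2 - 2 * (⟪x, x + u⟫ / (‖x‖ * ‖x + u‖)) ∧
    ‖‖x + u‖⁻¹ • (x + u) - ‖x‖⁻¹ • x‖ ^ 2 ≤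
        2 * (1 - Real.sqrt (L / (L + 1)) + Real.sqrt (1 / (L + 1))) ∧
    Tendsto (fun L : ℕ => 2 * (1 - Real.sqrt (L / (L + 1)) + Real.sqrt (1 / (L + 1))))
      atTop (nhds 0) := by
  have hLpos : (0:ℝ) < L := by exact_mod_cast hL
  have hdpos : (0:ℝ) < d := by exact_mod_cast hd
  have hkLd : (0:ℝ) < k * L * d := by positivity
  have hkL1d : (0:ℝ) < k * (L + 1) * d := by positivity
  have hxpos : 0 < ‖x‖ := by rw [hx]; exact Real.sqrt_pos.mpr hkLd
  have hxupos : 0 < ‖x + u‖ := by rw [hxu]; exact Real.sqrt_pos.mpr hkL1d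
  -- Part 1
  have h1 : ‖‖x + u‖⁻¹ • (x + u) - ‖x‖⁻¹ • x‖ ^ 2 =
      2 - 2 * (⟪x, x + u⟫ / (‖x‖ * ‖x + u‖)) := by
    rw [norm_sub_sq_real]
    rw [norm_smul, norm_smul, real_inner_smul_left, real_inner_smul_right]
    rw [real_inner_comm (x + u) x]
    rw [Real.norm_eq_abs, Real.norm_eq_abs, abs_of_pos (by positivity),
      abs_of_pos (by positivity)]
    rw [inv_mul_cancel₀ hxupos.ne', inv_mul_cancel₀ hxpos.ne',
      div_eq_mul_inv, mul_inv]
    ring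
  refine ⟨h1, ?_, ?_⟩
  · -- Part 2
    rw [h1]
    have hinner : ⟪x, x + u⟫ ≥ ‖x‖ ^ 2 - ‖x‖ * Real.sqrt (k * d) := by
      rw [inner_add_right, real_inner_self_eq_norm_sq]
      have := abs_real_inner_le_norm x u
      have h2 : -(‖x‖ * ‖u‖) ≤ ⟪x, u⟫ := neg_le_of_abs_le this
      nlinarith [mul_le_mul_of_nonneg_left hu hxpos.le]
    have hcos : Real.sqrt (L / (L + 1)) - Real.sqrt (1 / (L + 1)) ≤
        ⟪x, x + u⟫ / (‖x‖ * ‖x + u‖) := by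
      have hA : ‖x‖ / ‖x + u‖ = Real.sqrt (L / (L + 1)) := by
        rw [hx, hxu, ← Real.sqrt_div' _ (by positivity)]
        · congr 1
          field_simp
      have hB : Real.sqrt (k * d) / ‖x + u‖ = Real.sqrt (1 / (L + 1)) := by
        rw [hxu, ← Real.sqrt_div' _ (by positivity)]
        · congr 1
          field_simp
      have key : (‖x‖ ^ 2 - ‖x‖ * Real.sqrt (k * d)) / (‖x‖ * ‖x + u‖)
          = Real.sqrt (L / (L + 1)) - Real.sqrt (1 / (L + 1)) := by
        rw [← hA, ← hB]
        field_simp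
      rw [← key]
      gcongr
    nlinarith [hcos]
  · -- Part 3
    have h0 : Tendsto (fun n : ℕ => 1 / ((n:ℝ) + 1)) atTop (nhds 0) :=
      tendsto_one_div_add_atTop_nhds_zero_nat
    have h1' : Tendsto (fun n : ℕ => ((n:ℝ)) / (n + 1)) atTop (nhds 1) := by
      have : ∀ n : ℕ, ((n:ℝ)) / (n + 1) = 1 - 1 / ((n:ℝ) + 1) := by
        intro n
        have : ((n:ℝ) + 1) ≠ 0 := by positivity
        field_simp
        ring
      simp_rw [this]
      simpa using (tendsto_const_nhds.sub h0)
    have hs1 : Tendsto (fun n : ℕ => Real.sqrt ((n:ℝ) / (n + 1))) atTop (nhds 1) := by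
      have := h1'.sqrt
      rwa [Real.sqrt_one] at this
    have hs0 : Tendsto (fun n : ℕ => Real.sqrt (1 / ((n:ℝ) + 1))) atTop (nhds 0) := by
      have := h0.sqrt
      rwa [Real.sqrt_zero] at this
    have : Tendsto (fun n : ℕ => 2 * (1 - Real.sqrt ((n:ℝ) / (n + 1)) +
        Real.sqrt (1 / ((n:ℝ) + 1)))) atTop (nhds (2 * (1 - 1 + 0))) :=
      (tendsto_const_nhds.sub hs1 |>.add hs0).const_mul 2
    simpa using this
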